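/- arXiv:2012.13395 — 2 statements merged into one kernel-verified Lean document; each statement's English description precedes it below -/
import Mathlib

section
/- (Effective local-dimension invariance) Let q, p be distinct primes and let M = [I_k X_2 | Z_1 Z_2] ∈ Z^{k×2n} with all entries in {0,…,q−1}. Then there exists a strictly lower triangular integer matrix L ∈ Z^{k×k} with every entry divisible by q such that M' = [I_k X_2 | Z_1+L Z_2] satisfies: the integer symplectic product of any two distinct rows of M' is ≡ 0 (mod p). In particular M' ≡ M (mod q). -/
/-- Integer symplectic product ⊙(u,v) = Σ_k (v_z)_k(u_x)_k − (v_x)_k(u_z)_k. -/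
def symp {ι : Type} [Fintype ι] (u v : (ι → ℤ) × (ι → ℤ)) : ℤ :=
  ∑ i, (v.2 i * u.1 i - v.1 i * u.2 i)

/-- effective local-dimension invariance: for distinct primes q, p and
M = [I_k X_2 | Z_1 Z_2] ∈ Z^{k×2n} with entries in {0,…,q−1}, there is a strictly lower
triangular integer matrix L with all entries divisible by q (so M' ≡ M (mod q)) such that
M' = [I_k X_2 | Z_1+L Z_2] has all pairwise symplectic products of distinct rows ≡ 0 (mod p). -/
theorem stmt8 (q p k m : ℕ) [Fact (Nat.Prime q)] [Fact (Nat.Prime p)] (hqp : q ≠ p)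
    (Mx Mz : Matrix (Fin k) (Fin k ⊕ Fin m) ℤ)
    (hId : ∀ i j, Mx i (Sum.inl j) = if i = j then 1 else 0)
    (hbx : ∀ i c, 0 ≤ Mx i c ∧ Mx i c ≤ (q : ℤ) - 1)
    (hbz : ∀ i c, 0 ≤ Mz i c ∧ Mz i c ≤ (q : ℤ) - 1) :
    ∃ L : Matrix (Fin k) (Fin k) ℤ,
      (∀ i j : Fin k, i ≤ j → L i j = 0) ∧
      (∀ i j : Fin k, (q : ℤ) ∣ L i j) ∧
      (∀ i j : Fin k, i ≠ j →
        (p : ℤ) ∣ symp (Mx i, fun c => Mz i c + Sum.elim (L i) 0 c)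
                       (Mx j, fun c => Mz j c + Sum.elim (L j) 0 c)) := by
  have hq : Nat.Prime q := Fact.out
  have hp : Nat.Prime p := Fact.out
  have hcop : IsCoprime (q : ℤ) (p : ℤ) := by
    rw [Int.isCoprime_iff_gcd_eq_one]
    simpa [Int.gcd_natCast_natCast] using (Nat.coprime_primes hq hp).mpr hqp
  obtain ⟨a, b, hab⟩ := hcop
  set S : Fin k → Fin k → ℤ := fun i j => symp (Mx i, Mz i) (Mx j, Mz j) with hS
  set L : Matrix (Fin k) (Fin k) ℤ :=
    fun i j => if j < i then q * (a * (-(S j i))) else 0 with hL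
  have hanti : ∀ i j, S j i = -(S i j) := by
    intro i j
    have : S j i + S i j = 0 := by
      simp only [hS, symp, ← Finset.sum_add_distrib]
      apply Finset.sum_eq_zero
      intro c _
      ring
    linarith
  have key : ∀ i j, symp (Mx i, fun c => Mz i c + Sum.elim (L i) 0 c)
      (Mx j, fun c => Mz j c + Sum.elim (L j) 0 c) = S i j + L j i - L i j := by
    intro i j
    have hsplit : ∀ c : Fin k ⊕ Fin m,
        (Mz j c + Sum.elim (L j) 0 c) * Mx i c - Mx j c * (Mz i c + Sum.elim (L i) 0 c)
          = (Mz j c * Mx i c - Mx j c * Mz i c)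
            + (Sum.elim (L j) 0 c * Mx i c - Mx j c * Sum.elim (L i) 0 c) := by
      intro c; ring
    simp only [symp, hsplit, Finset.sum_add_distrib]
    have h1 : (∑ c : Fin k ⊕ Fin m, (Sum.elim (L j) 0 c * Mx i c - Mx j c * Sum.elim (L i) 0 c))
        = L j i - L i j := by
      rw [Fintype.sum_sum_type]
      simp only [Sum.elim_inl, Sum.elim_inr, Pi.zero_apply, zero_mul, mul_zero, sub_zero,
        zero_sub, neg_zero, Finset.sum_const_zero, add_zero, hId, mul_ite, ite_mul, mul_one,
        mul_zero, one_mul, zero_mul]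
      rw [Finset.sum_sub_distrib]
      congr 1
      · simp [Finset.sum_ite_eq]
      · simp [Finset.sum_ite_eq]
    rw [h1]
    simp only [hS, symp]
    ring
  refine ⟨L, ?_, ?_, ?_⟩
  · intro i j hij
    simp [hL, not_lt.mpr hij]
  · intro i j
    by_cases h : j < i
    · simp only [hL, if_pos h]; exact Dvd.intro _ rfl
    · simp [hL, h]
  · intro i j hij
    rw [key]
    rcases lt_or_gt_of_ne hij with h | h
    · have hLij : L i j = 0 := by simp [hL, not_lt.mpr h.le]
      have hLji : L j i = q * (a * (-(S i j))) := by simp [hL, h]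
      refine ⟨b * S i j, ?_⟩
      rw [hLij, hLji]
      linear_combination (-(S i j)) * hab
    · have hLji : L j i = 0 := by simp [hL, not_lt.mpr h.le]
      have hLij : L i j = q * (a * (-(S j i))) := by simp [hL, h]
      refine ⟨b * S i j, ?_⟩
      rw [hLij, hLji, hanti i j]
      linear_combination (-(S i j)) * hab
end

section
/- (Entanglement removal, abstract form) Let q, p be distinct primes and let v_1,…,v_k ∈ (Z/q)^{2n} be vectors representing the generators of an entanglement-assisted code, with integer lifts having entries in {0,…,q−1} and forming a matrix of canonical form [I_k X_2 | Z_1 Z_2]. Then there exist integer vectors v'_1,…,v'_k ∈ Z^{2n} with v'_i ≡ v_i (mod q) such that the reductions of v'_1,…,v'_k mod p are pairwise symplectically orthogonal in (Z/p)^{2n}, i.e., they generate an abelian (entanglement-free) stabilizer group over p levels. -/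
/-- entanglement removal, abstract form: q, p distinct primes; the generators
of the entanglement-assisted code are given by integer lifts (Vx, Vz) with entries in
{0,…,q−1} in canonical form [I_k X_2 | Z_1 Z_2] (columns indexed by Fin k ⊕ Fin m, m = n−k).
Then there exist integer vectors v'_i ≡ v_i (mod q) whose reductions mod p are pairwise
symplectically orthogonal, i.e. they generate an abelian (entanglement-free) stabilizer
group over p levels. -/
theorem stmt17 (q p k m : ℕ) [Fact (Nat.Prime q)] [Fact (Nat.Prime p)] (hqp : q ≠ p)
    (Vx Vz : Matrix (Fin k) (Fin k ⊕ Fin m) ℤ)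
    (hId : ∀ i j, Vx i (Sum.inl j) = if i = j then 1 else 0)
    (hbx : ∀ i c, 0 ≤ Vx i c ∧ Vx i c ≤ (q : ℤ) - 1)
    (hbz : ∀ i c, 0 ≤ Vz i c ∧ Vz i c ≤ (q : ℤ) - 1) :
    ∃ Vx' Vz' : Matrix (Fin k) (Fin k ⊕ Fin m) ℤ,
      (∀ i c, (q : ℤ) ∣ (Vx' i c - Vx i c) ∧ (q : ℤ) ∣ (Vz' i c - Vz i c)) ∧
      (∀ i j : Fin k, i ≠ j → (p : ℤ) ∣ symp (Vx' i, Vz' i) (Vx' j, Vz' j)) := by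
  classical
  set S : Fin k → Fin k → ℤ := fun i j => symp (Vx i, Vz i) (Vx j, Vz j) with hS
  have hanti : ∀ i j, S j i = - S i j := by
    intro i j
    simp only [hS, symp, ← Finset.sum_neg_distrib]
    exact Finset.sum_congr rfl fun c _ => by ring
  have hqu : (q : ZMod p) ≠ 0 := by
    rw [Ne, ZMod.natCast_eq_zero_iff]
    intro h
    exact hqp ((Nat.prime_dvd_prime_iff_eq (Fact.out) (Fact.out)).mp h).symm
  set sol : ℤ → ℤ := fun x => (((x : ZMod p)) * (q : ZMod p)⁻¹).val with hsoldef
  have hsol : ∀ x : ℤ, (p : ℤ) ∣ ((q : ℤ) * sol x - x) := by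
    intro x
    have : (((q : ℤ) * sol x - x : ℤ) : ZMod p) = 0 := by
      push_cast [hsoldef]
      rw [ZMod.natCast_val, ZMod.cast_id]
      field_simp
      ring
    exact (ZMod.intCast_zmod_eq_zero_iff_dvd _ _).mp this
  set A : Fin k → Fin k → ℤ := fun i l => if (l : ℕ) < (i : ℕ) then sol (-(S l i)) else 0 with hA
  have hAkey : ∀ i j : Fin k, i ≠ j → (p : ℤ) ∣ (S i j + q * (A j i - A i j)) := by
    intro i j hij
    rcases lt_trichotomy (i : ℕ) (j : ℕ) with h | h | h
    · have h1 : A j i = sol (-(S i j)) := by simp only [hA]; exact if_pos h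
      have h2 : A i j = 0 := by simp only [hA]; exact if_neg (by omega)
      have heq : S i j + (q : ℤ) * (A j i - A i j) = (q : ℤ) * sol (-(S i j)) - (-(S i j)) := by
        rw [h1, h2]; ring
      rw [heq]; exact hsol _
    · exact absurd (Fin.ext h) hij
    · have h1 : A i j = sol (-(S j i)) := by simp only [hA]; exact if_pos h
      have h2 : A j i = 0 := by simp only [hA]; exact if_neg (by omega)
      have h3 : -(S j i) = S i j := by rw [hanti]; ring
      have heq : S i j + (q : ℤ) * (A j i - A i j)
          = -((q : ℤ) * sol (S i j) - S i j) := by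
        rw [h1, h2, h3]; ring
      rw [heq]; exact dvd_neg.mpr (hsol _)
  refine ⟨Vx, fun i c => Vz i c + q * Sum.elim (A i) (fun _ => 0) c, ?_, ?_⟩
  · intro i c
    refine ⟨⟨0, by ring⟩, ⟨Sum.elim (A i) (fun _ => 0) c, by ring⟩⟩
  · intro i j hij
    have key : symp (Vx i, fun c => Vz i c + q * Sum.elim (A i) (fun _ => 0) c)
        (Vx j, fun c => Vz j c + q * Sum.elim (A j) (fun _ => 0) c)
        = S i j + q * (A j i - A i j) := by
      simp only [hS, symp]
      have step : ∀ x : Fin k ⊕ Fin m,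
          (Vz j x + (q : ℤ) * Sum.elim (A j) (fun _ => 0) x) * Vx i x -
            Vx j x * (Vz i x + (q : ℤ) * Sum.elim (A i) (fun _ => 0) x)
          = (Vz j x * Vx i x - Vx j x * Vz i x) +
            (q : ℤ) * (Sum.elim (A j) (fun _ => 0) x * Vx i x
              - Vx j x * Sum.elim (A i) (fun _ => 0) x) := fun x => by ring
      rw [Finset.sum_congr rfl fun x _ => step x, Finset.sum_add_distrib]
      congr 1
      rw [← Finset.mul_sum]
      congr 1
      rw [Fintype.sum_sum_type]
      simp [hId, mul_ite, ite_mul, Finset.sum_sub_distrib, Finset.sum_ite_eq,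
        Finset.sum_ite_eq']
    rw [key]; exact hAkey i j hij
end
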